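/- In the OV-graph built from vector sets A, B ⊆ {0,1}^d (with a vertex for each vector in A and B, a vertex c_i for each coordinate i, and an edge between a vector-vertex v and c_i iff v[i] = 1), a pair a ∈ A, b ∈ B is orthogonal (i.e., there is no coordinate i with a[i] = b[i] = 1) if and only if the graph distance d(a, b) > 2. -/

import Mathlib

/-- The OV-graph: vertices are the vectors of `A` (indexed by `Fin n`), the vectors of `B`
(indexed by `Fin m`) and the coordinate vertices `c_1, …, c_d`; a vector-vertex is adjacent
to `c_k` iff its `k`-th coordinate is `1`. -/
def OVGraph {n m d : ℕ} (a : Fin n → Fin d → Bool) (b : Fin m → Fin d → Bool) :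
    SimpleGraph ((Fin n ⊕ Fin m) ⊕ Fin d) :=
  SimpleGraph.fromRel fun u v =>
    match u, v with
    | Sum.inl (Sum.inl i), Sum.inr k => a i k
    | Sum.inl (Sum.inr j), Sum.inr k => b j k
    | _, _ => False

/-- A pair `a ∈ A`, `b ∈ B` is orthogonal iff their distance in the OV-graph exceeds 2. -/
theorem stmt0 {n m d : ℕ} (a : Fin n → Fin d → Bool) (b : Fin m → Fin d → Bool)
    (ha : ∀ i, ∃ k, a i k) (hb : ∀ j, ∃ k, b j k) (i : Fin n) (j : Fin m) :
    (∀ k, ¬(a i k ∧ b j k)) ↔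
      2 < (OVGraph a b).edist (Sum.inl (Sum.inl i)) (Sum.inl (Sum.inr j)) := by
  constructor
  · intro h
    by_contra hle
    push_neg at hle
    have hne : (OVGraph a b).edist (Sum.inl (Sum.inl i)) (Sum.inl (Sum.inr j)) ≠ ⊤ :=
      fun ht => by simp [ht] at hle
    obtain ⟨p, hp⟩ := SimpleGraph.exists_walk_of_edist_ne_top hne
    have hlen : (p.length : ℕ∞) ≤ 2 := hp ▸ hle
    have hlen2 : p.length ≤ 2 := by exact_mod_cast hlen
    cases p with
    | cons h1 q =>
      rename_i x
      cases q with
      | nil => simp [OVGraph, SimpleGraph.fromRel_adj] at h1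
      | cons h2 r =>
        rename_i y
        have hq : r.length = 0 := by simp only [SimpleGraph.Walk.length_cons] at hlen2; omega
        have hyq := SimpleGraph.Walk.eq_of_length_eq_zero hq
        subst hyq
        match x with
        | Sum.inl u => simp [OVGraph, SimpleGraph.fromRel_adj] at h1
        | Sum.inr k =>
          simp [OVGraph, SimpleGraph.fromRel_adj] at h1 h2
          exact h k ⟨h1, h2⟩
  · intro h2 k ⟨hak, hbk⟩
    have hadj1 : (OVGraph a b).Adj (Sum.inl (Sum.inl i)) (Sum.inr k) := by
      simp [OVGraph, SimpleGraph.fromRel_adj, hak]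
    have hadj2 : (OVGraph a b).Adj (Sum.inr k) (Sum.inl (Sum.inr j)) := by
      simp [OVGraph, SimpleGraph.fromRel_adj, hbk]
    have := SimpleGraph.edist_le ((hadj1.toWalk.append hadj2.toWalk))
    simp at this
    exact absurd this h2.not_ge
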